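/- arXiv:2604.14854 — 3 statements merged into one kernel-verified Lean document; each statement's English description precedes it below -/
import Mathlib

section
/- Unboundedness of the passivity region: suppose K₀ ∈ ℝ^{m×n}, P₀ ≻ 0 satisfy the passivity LMI N(Z₀, W₀) ⪯ 0 with Z₀ = P₀^{-1}, W₀ = K₀ Z₀, where N(Z,W) = [[Z A^T + A Z − W^T B_u^T − B_u W, B_d − Z C^T],[B_d^T − C Z, −D − D^T]], and B_u ≠ 0. Then for every t ≥ 0 the gain K(t) = K₀ + t B_u^T P₀ also satisfies the passivity LMI (with the same Z₀ and W(t) = W₀ + t B_u^T), and ‖K(t)‖_F → ∞ as t → ∞. Hence the set of passivating gains is unbounded. -/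
open Matrix Filter in
private lemma psd_smul {k : ℕ} {M : Matrix (Fin k) (Fin k) ℝ} (hM : M.PosSemidef)
    {c : ℝ} (hc : 0 ≤ c) : (c • M).PosSemidef := by
  refine Matrix.PosSemidef.of_dotProduct_mulVec_nonneg ?_ (fun x => ?_)
  · unfold Matrix.IsHermitian
    rw [conjTranspose_smul, hM.1]
    simp
  · rw [smul_mulVec, dotProduct_smul, smul_eq_mul]
    exact mul_nonneg hc (hM.dotProduct_mulVec_nonneg x)

open Matrix Filter in
private lemma psd_fromBlocks {k l : ℕ} {P : Matrix (Fin k) (Fin k) ℝ} (hP : P.PosSemidef) :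
    (Matrix.fromBlocks P 0 0 (0 : Matrix (Fin l) (Fin l) ℝ)).PosSemidef := by
  refine Matrix.PosSemidef.of_dotProduct_mulVec_nonneg ?_ (fun x => ?_)
  · unfold Matrix.IsHermitian
    rw [fromBlocks_conjTranspose, hP.1]
    simp
  · rw [← Sum.elim_comp_inl_inr x]
    simp only [fromBlocks_mulVec, Matrix.zero_mulVec, add_zero, zero_add,
      Function.star_sumElim, sumElim_dotProduct_sumElim, dotProduct_zero]
    simpa using hP.dotProduct_mulVec_nonneg (x ∘ Sum.inl)

open Matrix Filter in
private lemma psd_buBuT {n m : ℕ} (Bu : Matrix (Fin n) (Fin m) ℝ) :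
    (Bu * Buᵀ).PosSemidef := by
  have := Matrix.posSemidef_self_mul_conjTranspose Bu
  rwa [conjTranspose_eq_transpose_of_trivial] at this


open Matrix Filter

/-- Frobenius norm of a real matrix. -/
noncomputable def frobNorm {m n : ℕ} (M : Matrix (Fin m) (Fin n) ℝ) : ℝ :=
  Real.sqrt (∑ i, ∑ j, (M i j) ^ 2)

/-- The passivity LMI matrix `N(Z, W)`. -/
def passN {n m p : ℕ}
    (A : Matrix (Fin n) (Fin n) ℝ) (Bu : Matrix (Fin n) (Fin m) ℝ)
    (Bd : Matrix (Fin n) (Fin p) ℝ) (C : Matrix (Fin p) (Fin n) ℝ)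
    (D : Matrix (Fin p) (Fin p) ℝ)
    (Z : Matrix (Fin n) (Fin n) ℝ) (W : Matrix (Fin m) (Fin n) ℝ) :
    Matrix (Fin n ⊕ Fin p) (Fin n ⊕ Fin p) ℝ :=
  Matrix.fromBlocks
    (Z * Aᵀ + A * Z - Wᵀ * Buᵀ - Bu * W) (Bd - Z * Cᵀ)
    (Bdᵀ - C * Z) (-D - Dᵀ)

/-- Unboundedness of the passivity region: translating `W₀` along `t • Buᵀ`
preserves the passivity LMI, the corresponding gains `K₀ + t • Buᵀ P₀` blow up
in Frobenius norm, and hence the set of passivating gains is unbounded. -/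
theorem stmt_4 {n m p : ℕ}
    (A : Matrix (Fin n) (Fin n) ℝ) (Bu : Matrix (Fin n) (Fin m) ℝ)
    (Bd : Matrix (Fin n) (Fin p) ℝ) (C : Matrix (Fin p) (Fin n) ℝ)
    (D : Matrix (Fin p) (Fin p) ℝ) (hBu : Bu ≠ 0)
    (K₀ : Matrix (Fin m) (Fin n) ℝ) (P₀ : Matrix (Fin n) (Fin n) ℝ)
    (hP₀ : P₀.PosDef)
    (h₀ : (-(passN A Bu Bd C D P₀⁻¹ (K₀ * P₀⁻¹))).PosSemidef) :
    (∀ t : ℝ, 0 ≤ t →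
        (-(passN A Bu Bd C D P₀⁻¹ (K₀ * P₀⁻¹ + t • Buᵀ))).PosSemidef) ∧
    Tendsto (fun t : ℝ => frobNorm (K₀ + t • (Buᵀ * P₀))) atTop atTop ∧
    ¬ ∃ R : ℝ, ∀ K : Matrix (Fin m) (Fin n) ℝ,
        (∃ (Z : Matrix (Fin n) (Fin n) ℝ) (W : Matrix (Fin m) (Fin n) ℝ),
          Z.PosDef ∧ (-(passN A Bu Bd C D Z W)).PosSemidef ∧ K = W * Z⁻¹) →
        frobNorm K ≤ R := by
  have hdet : IsUnit P₀.det := hP₀.det_pos.ne'.isUnit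
  -- Part 1
  have part1 : ∀ t : ℝ, 0 ≤ t →
      (-(passN A Bu Bd C D P₀⁻¹ (K₀ * P₀⁻¹ + t • Buᵀ))).PosSemidef := by
    intro t ht
    have key : -(passN A Bu Bd C D P₀⁻¹ (K₀ * P₀⁻¹ + t • Buᵀ))
        = -(passN A Bu Bd C D P₀⁻¹ (K₀ * P₀⁻¹))
          + Matrix.fromBlocks ((2 * t) • (Bu * Buᵀ)) 0 0 0 := by
      simp only [passN, Matrix.fromBlocks_neg]
      rw [Matrix.fromBlocks_add, Matrix.fromBlocks_inj]
      refine ⟨?_, by simp, by simp, by simp⟩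
      simp only [transpose_add, transpose_smul, transpose_transpose,
        Matrix.add_mul, Matrix.mul_add, Matrix.smul_mul, Matrix.mul_smul]
      module
    rw [key]
    exact h₀.add (psd_fromBlocks (psd_smul (psd_buBuT Bu) (by linarith)))
  -- the matrix Buᵀ * P₀ is nonzero
  have hM : Buᵀ * P₀ ≠ 0 := by
    intro h
    apply hBu
    have : Buᵀ * P₀ * P₀⁻¹ = 0 := by rw [h, Matrix.zero_mul]
    rw [Matrix.mul_nonsing_inv_cancel_right _ _ hdet] at this
    simpa using congrArg Matrix.transpose this
  obtain ⟨i, j, hij⟩ : ∃ i j, (Buᵀ * P₀) i j ≠ 0 := by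
    by_contra h
    push_neg at h
    exact hM (by ext i j; exact h i j)
  set b : ℝ := (Buᵀ * P₀) i j with hb
  have hbpos : 0 < |b| := abs_pos.mpr hij
  -- entrywise lower bound for the Frobenius norm
  have frob_ge : ∀ M : Matrix (Fin m) (Fin n) ℝ, |M i j| ≤ frobNorm M := by
    intro M
    rw [← Real.sqrt_sq_eq_abs]
    apply Real.sqrt_le_sqrt
    calc M i j ^ 2 ≤ ∑ j', M i j' ^ 2 :=
          Finset.single_le_sum (f := fun j' => M i j' ^ 2) (fun _ _ => sq_nonneg _) (Finset.mem_univ j)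
      _ ≤ ∑ i', ∑ j', M i' j' ^ 2 :=
          Finset.single_le_sum (f := fun i' => ∑ j', M i' j' ^ 2)
            (fun i' _ => Finset.sum_nonneg fun _ _ => sq_nonneg _)
            (Finset.mem_univ i)
  -- Part 2
  have part2 : Tendsto (fun t : ℝ => frobNorm (K₀ + t • (Buᵀ * P₀))) atTop atTop := by
    have hg : Tendsto (fun t : ℝ => t * |b| - |K₀ i j|) atTop atTop :=
      (tendsto_id.atTop_mul_const hbpos).atTop_add tendsto_const_nhds
    refine tendsto_atTop_mono' atTop ?_ hg
    filter_upwards [eventually_ge_atTop (0 : ℝ)] with t ht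
    have h1 : t * |b| - |K₀ i j| ≤ |K₀ i j + t * b| := by
      have : |t * b| ≤ |K₀ i j + t * b| + |K₀ i j| := by
        calc |t * b| = |(K₀ i j + t * b) - K₀ i j| := by ring_nf
          _ ≤ |K₀ i j + t * b| + |K₀ i j| := abs_sub _ _
      rw [abs_mul, abs_of_nonneg ht] at this
      linarith
    refine h1.trans ?_
    have := frob_ge (K₀ + t • (Buᵀ * P₀))
    simpa [hb] using this
  refine ⟨part1, part2, ?_⟩
  -- Part 3
  rintro ⟨R, hR⟩
  have : ∀ᶠ t : ℝ in atTop, R < frobNorm (K₀ + t • (Buᵀ * P₀)) ∧ 0 ≤ t := by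
    filter_upwards [part2.eventually_gt_atTop R, eventually_ge_atTop (0 : ℝ)] with t h1 h2
    exact ⟨h1, h2⟩
  obtain ⟨t, hRt, ht⟩ := this.exists
  have hKeq : K₀ + t • (Buᵀ * P₀) = (K₀ * P₀⁻¹ + t • Buᵀ) * (P₀⁻¹)⁻¹ := by
    rw [Matrix.nonsing_inv_nonsing_inv _ hdet, Matrix.add_mul, Matrix.smul_mul,
      Matrix.mul_assoc, Matrix.nonsing_inv_mul _ hdet, Matrix.mul_one]
  have := hR (K₀ + t • (Buᵀ * P₀))
    ⟨P₀⁻¹, K₀ * P₀⁻¹ + t • Buᵀ, hP₀.inv, part1 t ht, hKeq⟩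
  linarith
end

section
/- The set 𝒫 of passivating gains is path-connected whenever it is nonempty: 𝒫 is the image of the convex set 𝓛 = {(Z,W) : Z ≻ 0, passivity LMI in (Z,W) holds} under the continuous map (Z,W) ↦ W Z^{-1}, and the continuous image of a nonempty convex (hence path-connected) set is path-connected. -/
open Matrix

lemma posSemidef_smul {k : Type*} [Fintype k] {M : Matrix k k ℝ}
    (h : M.PosSemidef) {c : ℝ} (hc : 0 ≤ c) : (c • M).PosSemidef := by
  refine ⟨?_, fun x => ?_⟩
  · unfold Matrix.IsHermitian
    rw [conjTranspose_smul, h.1]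
    simp
  · exact (h.smul hc).2 x

lemma posDef_smul {k : Type*} [Fintype k] {M : Matrix k k ℝ}
    (h : M.PosDef) {c : ℝ} (hc : 0 < c) : (c • M).PosDef := by
  refine ⟨?_, fun x hx => ?_⟩
  · unfold Matrix.IsHermitian
    rw [conjTranspose_smul, h.1]
    simp
  · exact (h.smul hc).2 hx

lemma posDef_combo {k : Type*} [Fintype k] {Z1 Z2 : Matrix k k ℝ}
    (h1 : Z1.PosDef) (h2 : Z2.PosDef) {a b : ℝ} (ha : 0 ≤ a) (hb : 0 ≤ b)
    (hab : a + b = 1) : (a • Z1 + b • Z2).PosDef := by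
  rcases ha.eq_or_lt with rfl | ha'
  · have hb1 : b = 1 := by linarith
    simpa [hb1] using h2
  · exact (posDef_smul h1 ha').add_posSemidef (posSemidef_smul h2.posSemidef hb)

lemma passN_combo {n m p : ℕ}
    (A : Matrix (Fin n) (Fin n) ℝ) (Bu : Matrix (Fin n) (Fin m) ℝ)
    (Bd : Matrix (Fin n) (Fin p) ℝ) (C : Matrix (Fin p) (Fin n) ℝ)
    (D : Matrix (Fin p) (Fin p) ℝ)
    (Z1 Z2 : Matrix (Fin n) (Fin n) ℝ) (W1 W2 : Matrix (Fin m) (Fin n) ℝ)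
    {a b : ℝ} (hab : a + b = 1) :
    passN A Bu Bd C D (a • Z1 + b • Z2) (a • W1 + b • W2) =
      a • passN A Bu Bd C D Z1 W1 + b • passN A Bu Bd C D Z2 W2 := by
  have hb : b = 1 - a := by linarith
  subst hb
  unfold passN
  have h11 : (a • Z1 + (1-a) • Z2) * Aᵀ + A * (a • Z1 + (1-a) • Z2)
      - (a • W1 + (1-a) • W2)ᵀ * Buᵀ - Bu * (a • W1 + (1-a) • W2)
      = a • (Z1 * Aᵀ + A * Z1 - W1ᵀ * Buᵀ - Bu * W1)
        + (1-a) • (Z2 * Aᵀ + A * Z2 - W2ᵀ * Buᵀ - Bu * W2) := by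
    simp only [transpose_add, transpose_smul, add_mul, mul_add, smul_mul_assoc,
      mul_smul_comm, Matrix.add_mul, Matrix.mul_add, Matrix.smul_mul, Matrix.mul_smul]
    module
  have h12 : Bd - (a • Z1 + (1-a) • Z2) * Cᵀ
      = a • (Bd - Z1 * Cᵀ) + (1-a) • (Bd - Z2 * Cᵀ) := by
    simp only [Matrix.add_mul, Matrix.smul_mul]
    module
  have h21 : Bdᵀ - C * (a • Z1 + (1-a) • Z2)
      = a • (Bdᵀ - C * Z1) + (1-a) • (Bdᵀ - C * Z2) := by
    simp only [Matrix.mul_add, Matrix.mul_smul]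
    module
  have h22 : -D - Dᵀ = a • (-D - Dᵀ) + (1-a) • (-D - Dᵀ) := by module
  rw [Matrix.fromBlocks_smul, Matrix.fromBlocks_smul, Matrix.fromBlocks_add]
  conv_lhs => rw [h11, h12, h21, h22]

/-- If nonempty, the set of passivating gains (the image of the convex LMI
solution set under `(Z, W) ↦ W Z⁻¹`) is path-connected. -/
theorem stmt_5 {n m p : ℕ}
    (A : Matrix (Fin n) (Fin n) ℝ) (Bu : Matrix (Fin n) (Fin m) ℝ)
    (Bd : Matrix (Fin n) (Fin p) ℝ) (C : Matrix (Fin p) (Fin n) ℝ)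
    (D : Matrix (Fin p) (Fin p) ℝ)
    (L : Set (Matrix (Fin n) (Fin n) ℝ × Matrix (Fin m) (Fin n) ℝ))
    (hL : L = {ZW | ZW.1.PosDef ∧ (-(passN A Bu Bd C D ZW.1 ZW.2)).PosSemidef})
    (Pgains : Set (Matrix (Fin m) (Fin n) ℝ))
    (hPgains : Pgains = (fun ZW : Matrix (Fin n) (Fin n) ℝ × Matrix (Fin m) (Fin n) ℝ =>
      ZW.2 * ZW.1⁻¹) '' L)
    (hne : L.Nonempty) :
    IsPathConnected Pgains := by
  -- convexity of L
  have hconv : Convex ℝ L := by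
    rintro ⟨Z1, W1⟩ h1 ⟨Z2, W2⟩ h2 a b ha hb hab
    rw [hL] at h1 h2 ⊢
    obtain ⟨hZ1, hN1⟩ := h1
    obtain ⟨hZ2, hN2⟩ := h2
    constructor
    · exact posDef_combo hZ1 hZ2 ha hb hab
    · show (-(passN A Bu Bd C D (a • Z1 + b • Z2) (a • W1 + b • W2))).PosSemidef
      rw [passN_combo A Bu Bd C D Z1 Z2 W1 W2 hab, neg_add, ← smul_neg, ← smul_neg]
      exact (posSemidef_smul (M := -(passN A Bu Bd C D Z1 W1)) hN1 ha).add
        (posSemidef_smul (M := -(passN A Bu Bd C D Z2 W2)) hN2 hb)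
  have hpc : IsPathConnected L := hconv.isPathConnected hne
  rw [hPgains]
  apply hpc.image'
  intro ZW hZW
  rw [hL] at hZW
  have hdet : IsUnit ZW.1.det := hZW.1.det_pos.ne'.isUnit
  have hinv : ContinuousAt Inv.inv ZW.1 :=
    continuousAt_matrix_inv ZW.1 (NormedRing.inverse_continuousAt hdet.unit)
  have hmul : Continuous fun q : Matrix (Fin m) (Fin n) ℝ × Matrix (Fin n) (Fin n) ℝ =>
      q.1 * q.2 := continuous_fst.matrix_mul continuous_snd
  have hpair : ContinuousAt
      (fun ZW : Matrix (Fin n) (Fin n) ℝ × Matrix (Fin m) (Fin n) ℝ => (ZW.2, ZW.1⁻¹)) ZW :=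
    continuousAt_snd.prodMk (hinv.comp continuousAt_fst)
  exact (hmul.continuousAt.comp hpair).continuousWithinAt
end

section
/- Nonconvexity example: for the system A = I₂, B_u = I₂, B_d = (1,0)^T, C = (1,0), D = 0, the gains K₁ = [[2,2],[0.5,2]] and K₂ = [[2,0.5],[2,2]] are both passivating (there exist P ≻ 0 with B_d^T P = C and (A−K)^T P + P(A−K) ⪯ 0, namely P = diag(1,4) and P = diag(1,1/4) respectively), but their midpoint K_c = [[2, 1.25],[1.25, 2]] admits no P ≻ 0 satisfying these conditions. Hence the set of passivating gains is not convex. -/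
open Matrix

/-- `K` is passivating for the example system `A = I₂`, `B_d = (1,0)ᵀ`,
`C = (1,0)`, `D = 0`. -/
def passivating (K : Matrix (Fin 2) (Fin 2) ℝ) : Prop :=
  ∃ P : Matrix (Fin 2) (Fin 2) ℝ, P.PosDef ∧
    (!![(1 : ℝ); 0])ᵀ * P = !![(1 : ℝ), 0] ∧
    (-(((1 : Matrix (Fin 2) (Fin 2) ℝ) - K)ᵀ * P +
        P * ((1 : Matrix (Fin 2) (Fin 2) ℝ) - K))).PosSemidef

lemma diag_posdef (p : ℝ) (hp : 0 < p) : (!![(1:ℝ),0;0,p]).PosDef := by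
  rw [Matrix.posDef_iff_dotProduct_mulVec]
  constructor
  · ext i j; fin_cases i <;> fin_cases j <;>
      simp [Matrix.conjTranspose_apply]
  · intro x hx
    have hx' : x 0 ≠ 0 ∨ x 1 ≠ 0 := by
      by_contra h
      push_neg at h
      apply hx
      ext i; fin_cases i <;> simp [h.1, h.2]
    simp [dotProduct, mulVec, Fin.sum_univ_two]
    rcases hx' with h | h <;>
      nlinarith [sq_nonneg (x 0), sq_nonneg (x 1), mul_self_pos.mpr h, mul_pos hp (mul_self_pos.mpr h)]

lemma psd_of (a b c : ℝ) (ha : 0 < a) (hc : 0 ≤ c) (hd : b^2 ≤ a*c) :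
    (!![a,b;b,c]).PosSemidef := by
  rw [Matrix.posSemidef_iff_dotProduct_mulVec]
  constructor
  · ext i j; fin_cases i <;> fin_cases j <;>
      simp [Matrix.conjTranspose_apply]
  · intro x
    simp [dotProduct, mulVec, Fin.sum_univ_two]
    nlinarith [sq_nonneg (a * x 0 + b * x 1), mul_nonneg (sub_nonneg.mpr hd) (sq_nonneg (x 1)), ha]

lemma bt2 : (!![(1 : ℝ); 0])ᵀ = !![(1 : ℝ), 0] := by
  ext i j; fin_cases i <;> fin_cases j <;> simp [Matrix.transpose_apply]

lemma bp_eq (P : Matrix (Fin 2) (Fin 2) ℝ) :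
    (!![(1 : ℝ); 0])ᵀ * P = !![P 0 0, P 0 1] := by
  rw [bt2]
  ext i j
  fin_cases i <;> fin_cases j <;>
    simp [Matrix.mul_apply, Fin.sum_univ_two]

lemma sub2 (a b c d e f g h : ℝ) :
    !![a,b;c,d] - !![e,f;g,h] = !![a-e, b-f; c-g, d-h] := by
  ext i j; fin_cases i <;> fin_cases j <;> simp

lemma tr2 (a b c d : ℝ) : (!![a,b;c,d])ᵀ = !![a,c;b,d] := by
  ext i j; fin_cases i <;> fin_cases j <;> simp [Matrix.transpose_apply]

lemma lyap_eq (K P : Matrix (Fin 2) (Fin 2) ℝ) (k00 k01 k10 k11 : ℝ)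
    (hK : K = !![k00, k01; k10, k11]) (p : ℝ) (hP : P = !![1,0;0,p]) :
    (-(((1 : Matrix (Fin 2) (Fin 2) ℝ) - K)ᵀ * P +
        P * ((1 : Matrix (Fin 2) (Fin 2) ℝ) - K)))
      = !![2*(k00-1), k01 + k10*p; k01 + k10*p, 2*p*(k11-1)] := by
  subst hK hP
  rw [Matrix.one_fin_two, sub2, tr2, Matrix.mul_fin_two, Matrix.mul_fin_two]
  ext i j
  fin_cases i <;> fin_cases j <;>
    (simp [Matrix.neg_apply, Matrix.add_apply]; try ring)

/-- Nonconvexity example: `K₁` and `K₂` are passivating but their midpoint is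
not; hence the set of passivating gains is not convex. -/
theorem stmt_6 :
    passivating !![(2 : ℝ), 2; 0.5, 2] ∧
    passivating !![(2 : ℝ), 0.5; 2, 2] ∧
    ¬ passivating !![(2 : ℝ), 1.25; 1.25, 2] ∧
    ¬ Convex ℝ {K : Matrix (Fin 2) (Fin 2) ℝ | passivating K} := by
  have h1 : passivating !![(2 : ℝ), 2; 0.5, 2] := by
    refine ⟨!![1,0;0,4], diag_posdef 4 (by norm_num), ?_, ?_⟩
    · rw [bp_eq]; norm_num
    · rw [lyap_eq _ _ 2 2 0.5 2 rfl 4 rfl]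
      have : (!![2*((2:ℝ)-1), 2 + 0.5*4; 2 + 0.5*4, 2*4*(2-1)]) = !![(2:ℝ),4;4,8] := by
        norm_num
      rw [this]
      exact psd_of 2 4 8 (by norm_num) (by norm_num) (by norm_num)
  have h2 : passivating !![(2 : ℝ), 0.5; 2, 2] := by
    refine ⟨!![1,0;0,1/4], diag_posdef (1/4) (by norm_num), ?_, ?_⟩
    · rw [bp_eq]; norm_num
    · rw [lyap_eq _ _ 2 0.5 2 2 rfl (1/4) rfl]
      have : (!![2*((2:ℝ)-1), 0.5 + 2*(1/4); 0.5 + 2*(1/4), 2*(1/4)*(2-1)]) = !![(2:ℝ),1;1,1/2] := by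
        norm_num
      rw [this]
      exact psd_of 2 1 (1/2) (by norm_num) (by norm_num) (by norm_num)
  have h3 : ¬ passivating !![(2 : ℝ), 1.25; 1.25, 2] := by
    rintro ⟨P, hP, hBP, hPSD⟩
    rw [bp_eq] at hBP
    have e00 : P 0 0 = 1 := by
      have := congrFun (congrFun hBP 0) 0; simpa using this
    have e01 : P 0 1 = 0 := by
      have := congrFun (congrFun hBP 0) 1; simpa using this
    have e10 : P 1 0 = 0 := by
      have := congrFun (congrFun hP.1 0) 1
      simp [Matrix.conjTranspose_apply] at this
      exact this.trans e01
    set p := P 1 1 with hp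
    have hppos : 0 < p := by
      have := (Matrix.posDef_iff_dotProduct_mulVec.mp hP).2 (x := ![0, 1]) (by
        intro h; simpa using congrFun h 1)
      simpa [dotProduct, mulVec, Fin.sum_univ_two, hp] using this
    have hPeq : P = !![1,0;0,p] := by
      ext i j; fin_cases i <;> fin_cases j <;> simp [e00, e01, e10, hp]
    have key := hPSD.dotProduct_mulVec_nonneg ![1.25*(1+p), -2]
    rw [lyap_eq _ _ 2 1.25 1.25 2 rfl p hPeq] at key
    simp [dotProduct, mulVec, Fin.sum_univ_two] at key
    nlinarith [sq_nonneg (1 + p), sq_nonneg (1 - p), key]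
  refine ⟨h1, h2, h3, ?_⟩
  intro hconv
  have hm := hconv h1 h2 (by norm_num : (0:ℝ) ≤ 1/2) (by norm_num : (0:ℝ) ≤ 1/2) (by norm_num)
  apply h3
  have : (1/2 : ℝ) • !![(2 : ℝ), 2; 0.5, 2] + (1/2 : ℝ) • !![(2 : ℝ), 0.5; 2, 2]
      = !![(2 : ℝ), 1.25; 1.25, 2] := by
    ext i j; fin_cases i <;> fin_cases j <;> norm_num
  rwa [this] at hm
end
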